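/- Let 𝒩 ⊆ ℕ ⊆ ℤ and for n ≥ 1 write A(n) = (1/n)·#{0 ≤ i ≤ n−1 : i ∈ 𝒩}. Suppose β > 0, 0 < ε̄ < 2, and δ ∈ (0, β) satisfy (β + δ)/(β − δ) < 1 + ε̄/2; suppose n₀ ∈ ℕ is such that |β − A(n)| < δ for all n ≥ n₀; and suppose N₀ ∈ ℕ satisfies N₀ > max{2n₀/(ε̄(β − δ)), 4/ε̄}. Then for every integer n ≥ N₀ and every real t ∈ [0,1], there exists an integer r with 0 ≤ r ≤ n, r ∈ 𝒩, and |r/n − t| < ε̄. -/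

import Mathlib

private lemma approx_aux1 (ε t nr : ℝ) (hε0 : 0 < ε) (hε2 : ε < 2)
    (ht0 : 0 ≤ t) (ht1 : t ≤ 1) (hen : 4 < ε * nr) :
    (1 + ε / 2) * ((t - ε / 2) * nr + 1) ≤ min (nr + 1) ((t + ε / 2) * nr) := by
  have hnr : 0 < nr := by nlinarith
  rw [le_min_iff]
  constructor <;>
    nlinarith [mul_nonneg (mul_nonneg hε0.le (sub_nonneg.mpr ht1)) hnr.le,
      mul_lt_mul_of_pos_left hen hε0, mul_le_mul_of_nonneg_right ht1 hnr.le]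

/-- Quantitative form of **Lemma 2** of the paper, with the explicit choices of
`δ`, `n₀` and `N₀` made in its proof. Here `𝒩 ⊆ ℕ` and
`A(n) = (1/n) · #{0 ≤ i ≤ n−1 : i ∈ 𝒩}`. -/
theorem approx_lemma_quantitative
    (𝒩 : Set ℕ)
    (A : ℕ → ℝ) (hA : ∀ n : ℕ, A n = ((𝒩 ∩ Set.Iio n).ncard : ℝ) / (n : ℝ))
    (β ε δ : ℝ) (hβ : 0 < β) (hε0 : 0 < ε) (hε2 : ε < 2)
    (hδ0 : 0 < δ) (hδβ : δ < β)
    (hratio : (β + δ) / (β - δ) < 1 + ε / 2)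
    (n₀ : ℕ) (hn₀ : ∀ n : ℕ, n₀ ≤ n → |β - A n| < δ)
    (N₀ : ℕ)
    (hN₀ : (N₀ : ℝ) > max (2 * (n₀ : ℝ) / (ε * (β - δ))) (4 / ε)) :
    ∀ n : ℕ, N₀ ≤ n → ∀ t : ℝ, t ∈ Set.Icc (0 : ℝ) 1 →
      ∃ r : ℕ, r ∈ 𝒩 ∧ r ≤ n ∧ |(r : ℝ) / (n : ℝ) - t| < ε := by
  intro n hn t ht
  obtain ⟨ht0, ht1⟩ := ht
  have hbd : (0:ℝ) < β - δ := by linarith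
  have hnN : (N₀ : ℝ) ≤ (n : ℝ) := Nat.cast_le.mpr hn
  have hn4 : 4 / ε < (n : ℝ) := lt_of_le_of_lt (le_max_right _ _) (lt_of_lt_of_le hN₀ hnN)
  have hen : 4 < ε * n := by
    rw [div_lt_iff₀ hε0] at hn4; linarith [hn4]
  have hnposR : (0:ℝ) < (n:ℝ) := lt_trans (by positivity) hn4
  have hnpos : 0 < n := by exact_mod_cast hnposR
  have hn0n : (n₀ : ℝ) < ε * (β - δ) * n / 2 := by
    have h := lt_of_lt_of_le (lt_of_le_of_lt (le_max_left _ _) hN₀) hnN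
    rw [div_lt_iff₀ (by positivity)] at h
    nlinarith
  -- counting estimates
  have hcount : ∀ m : ℕ, n₀ ≤ m → 1 ≤ m →
      (β - δ) * m < ((𝒩 ∩ Set.Iio m).ncard : ℝ) ∧
      ((𝒩 ∩ Set.Iio m).ncard : ℝ) < (β + δ) * m := by
    intro m hm hm1
    have hmR : (0:ℝ) < (m:ℝ) := by exact_mod_cast hm1
    have h := hn₀ m hm
    rw [hA m, abs_lt] at h
    constructor
    · have h1 : β - δ < ((𝒩 ∩ Set.Iio m).ncard : ℝ) / m := by linarith [h.2]
      exact (lt_div_iff₀ hmR).mp h1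
    · have h1 : ((𝒩 ∩ Set.Iio m).ncard : ℝ) / m < β + δ := by linarith [h.1]
      exact (div_lt_iff₀ hmR).mp h1
  have hfin : ∀ m : ℕ, (𝒩 ∩ Set.Iio m).Finite :=
    fun m => Set.Finite.subset (Set.finite_Iio m) Set.inter_subset_right
  have hcard_le : ∀ m : ℕ, ((𝒩 ∩ Set.Iio m).ncard : ℝ) ≤ m := by
    intro m
    have h1 : (𝒩 ∩ Set.Iio m).ncard ≤ (Set.Iio m).ncard :=
      Set.ncard_le_ncard Set.inter_subset_right (Set.finite_Iio m)
    have h2 : (Set.Iio m).ncard = m := by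
      rw [← Finset.coe_Iio, Set.ncard_coe_finset, Nat.card_Iio]
    exact_mod_cast h1.trans_eq h2
  -- β - δ < 1
  have hbd1 : β - δ < 1 := by
    have h := (hcount (max n₀ 1) (le_max_left _ _) (le_max_right _ _)).1
    have h2 := hcard_le (max n₀ 1)
    have hmR : (0:ℝ) < ((max n₀ 1 : ℕ):ℝ) := by
      exact_mod_cast (le_max_right n₀ 1 : 1 ≤ max n₀ 1)
    nlinarith
  have hratio' : β + δ < (1 + ε / 2) * (β - δ) := by
    rw [div_lt_iff₀ hbd] at hratio; linarith
  have hb2 : ε * (β - δ) * n / 2 < ε * n / 2 := by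
    nlinarith [mul_pos hε0 hnposR]
  by_cases hc : (t - ε / 2) * n ≤ n₀
  · -- small t case
    set m₂ := ⌈ε * n / 2⌉₊ with hm₂def
    have hm₂ge : ε * n / 2 ≤ (m₂ : ℝ) := Nat.le_ceil _
    have hm₂lt : (m₂ : ℝ) < ε * n / 2 + 1 := Nat.ceil_lt_add_one (by positivity)
    have hm₂n₀ : n₀ ≤ m₂ := by
      have : (n₀ : ℝ) < (m₂ : ℝ) := by linarith
      exact_mod_cast this.le
    have hm₂1 : 1 ≤ m₂ := by
      have : (1:ℝ) ≤ (m₂:ℝ) := by linarith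
      exact_mod_cast this
    have hpos := (hcount m₂ hm₂n₀ hm₂1).1
    have hm₂posR : (0:ℝ) < (m₂:ℝ) := by exact_mod_cast hm₂1
    have hposn : 0 < (𝒩 ∩ Set.Iio m₂).ncard := by
      have h0 : (0:ℝ) < ((𝒩 ∩ Set.Iio m₂).ncard : ℝ) :=
        lt_trans (mul_pos hbd hm₂posR) hpos
      exact_mod_cast h0
    obtain ⟨r, hr𝒩, hrlt⟩ := Set.nonempty_of_ncard_ne_zero (Nat.pos_iff_ne_zero.mp hposn)
    have hrR : (r : ℝ) < ε * n / 2 := by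
      have h1 : (r : ℝ) + 1 ≤ (m₂ : ℝ) := by exact_mod_cast Nat.succ_le_of_lt hrlt
      linarith
    have hεn2 : ε * n < 2 * n := by linarith [mul_lt_mul_of_pos_right hε2 hnposR]
    have hrn : r ≤ n := by
      have : (r : ℝ) < (n : ℝ) := by linarith
      exact_mod_cast this.le
    refine ⟨r, hr𝒩, hrn, ?_⟩
    have htn : t * n < ε * n := by linarith
    have htε : t < ε := lt_of_mul_lt_mul_right htn hnposR.le
    have hrdiv : (r : ℝ) / n < ε / 2 := by
      rw [div_lt_iff₀ hnposR]; linarith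
    have hrdiv0 : 0 ≤ (r : ℝ) / n := by positivity
    rw [abs_lt]
    constructor <;> linarith
  · -- main case
    push_neg at hc
    set x := (t - ε / 2) * n with hx
    have hx0 : (0:ℝ) ≤ x := le_of_lt (lt_of_le_of_lt (Nat.cast_nonneg n₀) hc)
    set m₁ := ⌊x⌋₊ + 1 with hm₁def
    have hm₁gt : x < (m₁ : ℝ) := by
      push_cast [hm₁def]; exact Nat.lt_floor_add_one x
    have hm₁le : (m₁ : ℝ) ≤ x + 1 := by
      push_cast [hm₁def]; have := Nat.floor_le hx0; linarith
    have hm₁n₀ : n₀ ≤ m₁ := by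
      have : (n₀ : ℝ) < (m₁ : ℝ) := lt_trans hc hm₁gt
      exact_mod_cast this.le
    have hm₁1 : 1 ≤ m₁ := Nat.succ_le_succ (Nat.zero_le _)
    have hm₁posR : (0:ℝ) < (m₁:ℝ) := by exact_mod_cast hm₁1
    set m₂ := min (n + 1) ⌈(t + ε / 2) * n⌉₊ with hm₂def
    have hy0 : (0:ℝ) ≤ (t + ε / 2) * n := by positivity
    have hm₂ge : min ((n:ℝ) + 1) ((t + ε / 2) * n) ≤ (m₂ : ℝ) := by
      rw [hm₂def]
      push_cast [Nat.cast_min]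
      exact min_le_min (le_refl _) (Nat.le_ceil _)
    have hkey : (1 + ε / 2) * (m₁ : ℝ) ≤ (m₂ : ℝ) := by
      have h6 : (1 + ε / 2) * (m₁ : ℝ) ≤ (1 + ε / 2) * (x + 1) :=
        mul_le_mul_of_nonneg_left hm₁le (by positivity)
      rw [hx] at h6
      exact le_trans (le_trans h6 (approx_aux1 ε t n hε0 hε2 ht0 ht1 hen)) hm₂ge
    have hm₂m₁ : m₁ ≤ m₂ := by
      have h1 : (m₁ : ℝ) ≤ (m₂ : ℝ) := by
        linarith [hkey, mul_nonneg hε0.le hm₁posR.le]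
      exact_mod_cast h1
    have hm₂n₀ : n₀ ≤ m₂ := le_trans hm₁n₀ hm₂m₁
    have hm₂1 : 1 ≤ m₂ := le_trans hm₁1 hm₂m₁
    have h1 := (hcount m₁ hm₁n₀ hm₁1).2
    have h2 := (hcount m₂ hm₂n₀ hm₂1).1
    have hcc : (𝒩 ∩ Set.Iio m₁).ncard < (𝒩 ∩ Set.Iio m₂).ncard := by
      have hr1 := mul_lt_mul_of_pos_right hratio' hm₁posR
      have hr2 := mul_le_mul_of_nonneg_left hkey hbd.le
      have h3 : ((𝒩 ∩ Set.Iio m₁).ncard : ℝ) < ((𝒩 ∩ Set.Iio m₂).ncard : ℝ) := by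
        linarith [h1, h2, hr1, hr2]
      exact_mod_cast h3
    have hex : ∃ r : ℕ, r ∈ 𝒩 ∧ m₁ ≤ r ∧ r < m₂ := by
      by_contra hcon
      push_neg at hcon
      have hsub : 𝒩 ∩ Set.Iio m₂ ⊆ 𝒩 ∩ Set.Iio m₁ := by
        rintro y ⟨hy1, hy2⟩
        refine ⟨hy1, ?_⟩
        by_contra hyn
        exact absurd hy2 (not_lt_of_ge (hcon y hy1 (le_of_not_gt hyn)))
      exact absurd (Set.ncard_le_ncard hsub (hfin m₁)) (not_le_of_gt hcc)
    obtain ⟨r, hr𝒩, hrm₁, hrm₂⟩ := hex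
    have hrle : r ≤ n := by
      have : r < n + 1 := lt_of_lt_of_le hrm₂ (min_le_left _ _)
      omega
    refine ⟨r, hr𝒩, hrle, ?_⟩
    have hrlow : x < (r : ℝ) := lt_of_lt_of_le hm₁gt (by exact_mod_cast hrm₁)
    have hrhigh : (r : ℝ) < (t + ε / 2) * n := by
      have h3 : r < ⌈(t + ε / 2) * n⌉₊ := lt_of_lt_of_le hrm₂ (min_le_right _ _)
      have h4 : ((r:ℝ)) + 1 ≤ ((⌈(t + ε / 2) * n⌉₊ : ℕ) : ℝ) := by
        exact_mod_cast Nat.succ_le_of_lt h3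
      have h5 := Nat.ceil_lt_add_one hy0
      linarith
    have hlow : t - ε / 2 < (r:ℝ)/n := by
      rw [lt_div_iff₀ hnposR]; rw [hx] at hrlow; linarith
    have hhigh : (r:ℝ)/n < t + ε / 2 := by
      rw [div_lt_iff₀ hnposR]; linarith
    rw [abs_lt]
    constructor <;> linarith
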